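/- In PSL(2,ℂ), the word z·x⁻¹·z·y⁻¹ equals the class of the parabolic matrix [[1, ω], [0, 1]]. -/

import Mathlib

/-!
Setup: `PSL(2,ℂ)` as the quotient of `SL(2,ℂ)` by its center, the constants
`u = (1+√5)/2`, `ω = (1+√(-3))/2 = (1+√3·i)/2`, and the generators of the
tetrahedral groups of Neumann–Reid.
-/

noncomputable section

abbrev SL2C := Matrix.SpecialLinearGroup (Fin 2) ℂ

/-- `PSL(2,ℂ)`, the quotient of `SL(2,ℂ)` by its center `{±I}`. -/
abbrev PSL2C := SL2C ⧸ Subgroup.center SL2C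

/-- The projection `SL(2,ℂ) → PSL(2,ℂ)`, `A ↦ [A]`. -/
def pr : SL2C →* PSL2C := QuotientGroup.mk' _

def u : ℂ := ((1 + Real.sqrt 5) / 2 : ℝ)
def ω : ℂ := (1 + Real.sqrt 3 * Complex.I) / 2

lemma u_ne : u ≠ 0 := Complex.ofReal_ne_zero.mpr (by positivity)

lemma ω_ne : ω ≠ 0 := by
  unfold ω
  intro h
  rw [div_eq_zero_iff] at h
  rcases h with h | h
  · have := congrArg Complex.re h
    simp at this
  · norm_num at h

def xSL : SL2C := ⟨!![u, -u⁻¹; u, 0], by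
  rw [Matrix.det_fin_two_of]; field_simp [u_ne]; ring⟩

def ySL : SL2C := ⟨!![0, ω * u⁻¹; -ω⁻¹ * u, 0], by
  rw [Matrix.det_fin_two_of]; field_simp [u_ne, ω_ne]; ring⟩

def zSL : SL2C := ⟨!![0, ω ^ 2 * u⁻¹; -(ω ^ 2)⁻¹ * u, 0], by
  rw [Matrix.det_fin_two_of]; field_simp [u_ne, ω_ne]; ring⟩

def x : PSL2C := pr xSL
def y : PSL2C := pr ySL
def z : PSL2C := pr zSL

lemma omega_sq : ω ^ 2 = ω - 1 := by
  have h3 : (Real.sqrt 3 : ℂ) ^ 2 = 3 := by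
    rw [← Complex.ofReal_pow, Real.sq_sqrt (by norm_num : (3:ℝ) ≥ 0)]; norm_num
  unfold ω
  field_simp
  ring_nf
  rw [Complex.I_sq]
  linear_combination (-1 : ℂ) * h3

lemma key : zSL * xSL⁻¹ * zSL * ySL⁻¹ =
    ⟨!![1, ω; 0, 1], by simp [Matrix.det_fin_two_of]⟩ := by
  have hω := omega_sq
  ext i j
  simp only [Matrix.SpecialLinearGroup.coe_mul, Matrix.SpecialLinearGroup.coe_inv]
  simp only [xSL, ySL, zSL, Matrix.adjugate_fin_two_of]
  fin_cases i <;> fin_cases j <;>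
    simp [Matrix.mul_apply, Fin.sum_univ_two] <;>
    field_simp [u_ne, ω_ne]
  · linear_combination (-(ω + 1)) * hω
  · linear_combination (-(ω + 1)) * hω

/-- The word `z·x⁻¹·z·y⁻¹` is the parabolic `[[1,ω],[0,1]]`. -/
theorem stmt4 :
    z * x⁻¹ * z * y⁻¹ = pr ⟨!![1, ω; 0, 1], by simp [Matrix.det_fin_two_of]⟩ := by
  show pr zSL * (pr xSL)⁻¹ * pr zSL * (pr ySL)⁻¹ = _
  rw [← map_inv, ← map_inv, ← map_mul, ← map_mul, ← map_mul, key]
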